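/- Fix integers K ≥ 1, N ≥ 1, m ≥ 1. Let w ∈ ℝ^m have nonnegative entries with w ≠ 0; for each k ∈ {0,…,K−1} let W_k > 0, ε_k > 0, α_k > 0 and r_k ∈ ℝ^m. For each player i ∈ {1,…,N}, let X_i ⊆ ((ℝ_{≥0})^m)^K be nonempty, compact and convex. Define player i's payoff by u_i(x) = Σ_{k=0}^{K−1} [ W_k·(wᵀx_{i,k})/(Σ_{j=1}^N wᵀx_{j,k} + ε_k) − x_{i,k}ᵀ(α_k·Σ_{j=1}^N x_{j,k} + r_k) ]. Then the game with strategy sets X_i and payoffs u_i admits exactly one Nash equilibrium. -/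

import Mathlib

open Finset

namespace Stmt9

variable {K N m : ℕ}

/-- participation value of one player's strategy at round `k` -/
def sf (w : Fin m → ℝ) (p : Fin K → Fin m → ℝ) (k : Fin K) : ℝ := ∑ a, w a * p k a

/-- denominator at round `k` -/
def den (w : Fin m → ℝ) (ε : Fin K → ℝ) (x : Fin N → Fin K → Fin m → ℝ) (k : Fin K) : ℝ :=
  (∑ j, sf w (x j) k) + ε k

/-- payoff of player `i` -/
noncomputable def pay (w : Fin m → ℝ) (W ε α : Fin K → ℝ) (r : Fin K → Fin m → ℝ)
    (i : Fin N) (x : Fin N → Fin K → Fin m → ℝ) : ℝ :=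
  ∑ k, (W k * sf w (x i) k / den w ε x k -
    ∑ a, x i k a * (α k * (∑ j, x j k a) + r k a))

/-- pseudo-gradient coordinate for player `i` -/
noncomputable def gr (w : Fin m → ℝ) (W ε α : Fin K → ℝ) (r : Fin K → Fin m → ℝ)
    (x : Fin N → Fin K → Fin m → ℝ) (i : Fin N) (k : Fin K) (a : Fin m) : ℝ :=
  W k * w a * (den w ε x k - sf w (x i) k) / (den w ε x k)^2
    - (α k * (x i k a + ∑ j, x j k a) + r k a)

lemma sum_update (f : (Fin K → Fin m → ℝ) → ℝ) (x : Fin N → Fin K → Fin m → ℝ)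
    (i : Fin N) (y : Fin K → Fin m → ℝ) :
    ∑ j, f (Function.update x i y j) = f y + ∑ j ∈ univ.erase i, f (x j) := by
  rw [← Finset.add_sum_erase _ _ (mem_univ i)]
  congr 1
  · simp
  · exact Finset.sum_congr rfl fun j hj => by
      rw [Function.update_of_ne (Finset.ne_of_mem_erase hj)]

/-- The key monotonicity inequality for the lossy Tullock pseudo-gradient, per round. -/
lemma key_ineq (ε : ℝ) (hε : 0 < ε) (s t : Fin N → ℝ) (hs : ∀ i, 0 ≤ s i)
    (ht : ∀ i, 0 ≤ t i) :
    ∑ i, ((((∑ j, s j) + ε) - s i)/((∑ j, s j) + ε)^2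
        - (((∑ j, t j) + ε) - t i)/((∑ j, t j) + ε)^2) * (s i - t i) ≤ 0 := by
  set A := ∑ j, s j with hA
  set B := ∑ j, t j with hB
  have hA0 : 0 ≤ A := Finset.sum_nonneg fun i _ => hs i
  have hB0 : 0 ≤ B := Finset.sum_nonneg fun i _ => ht i
  set E := A + ε with hE
  set F := B + ε with hF
  have hE0 : 0 < E := by positivity
  have hF0 : 0 < F := by positivity
  have hC : ∑ i, s i * t i ≤ A * B := by
    calc ∑ i, s i * t i ≤ ∑ i, s i * B :=
          Finset.sum_le_sum fun i _ => mul_le_mul_of_nonneg_left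
            (Finset.single_le_sum (fun j _ => ht j) (mem_univ i)) (hs i)
      _ = A * B := by rw [← Finset.sum_mul]
  -- multiplied-out version
  have hsum : ∑ i, ((E - s i)*F^2 - (F - t i)*E^2) * (s i - t i)
      = -(E-F)^2 * (E*F - ∑ i, s i * t i) - ∑ i, (F * s i - E * t i)^2 := by
    have h1 : ∑ i, ((E - s i)*F^2 - (F - t i)*E^2) * (s i - t i)
        = (E*F^2 - E^2*F)*A - (E*F^2 - E^2*F)*B - F^2 * (∑ i, (s i)^2)
          - E^2*(∑ i, (t i)^2) + (E^2+F^2)*(∑ i, s i * t i) := by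
      rw [Finset.mul_sum, Finset.mul_sum, Finset.mul_sum, Finset.mul_sum, Finset.mul_sum]
      rw [← Finset.sum_sub_distrib, ← Finset.sum_sub_distrib, ← Finset.sum_sub_distrib,
        ← Finset.sum_add_distrib]
      exact Finset.sum_congr rfl fun i _ => by ring
    have h2 : ∑ i, (F * s i - E * t i)^2
        = F^2 * (∑ i, (s i)^2) - 2*(E*F)*(∑ i, s i * t i) + E^2*(∑ i, (t i)^2) := by
      rw [Finset.mul_sum, Finset.mul_sum, Finset.mul_sum]
      rw [← Finset.sum_sub_distrib, ← Finset.sum_add_distrib]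
      exact Finset.sum_congr rfl fun i _ => by ring
    rw [h1, h2, hE, hF]
    ring
  have hnum : ∑ i, ((E - s i)*F^2 - (F - t i)*E^2) * (s i - t i) ≤ 0 := by
    rw [hsum]
    have h1 : 0 ≤ E*F - ∑ i, s i * t i := by nlinarith
    have h2 : 0 ≤ ∑ i, (F * s i - E * t i)^2 := Finset.sum_nonneg fun i _ => sq_nonneg _
    nlinarith [sq_nonneg (E - F)]
  have hterm : ∀ i : Fin N, ((E - s i)/E^2 - (F - t i)/F^2) * (s i - t i)
      = (((E - s i)*F^2 - (F - t i)*E^2) * (s i - t i)) / (E^2*F^2) := by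
    intro i
    field_simp
  rw [Finset.sum_congr rfl fun i _ => hterm i, ← Finset.sum_div]
  exact div_nonpos_of_nonpos_of_nonneg hnum (by positivity)


lemma sf_nonneg {w : Fin m → ℝ} (hw : ∀ a, 0 ≤ w a) {p : Fin K → Fin m → ℝ}
    (hp : ∀ k a, 0 ≤ p k a) (k : Fin K) : 0 ≤ sf w p k :=
  Finset.sum_nonneg fun a _ => mul_nonneg (hw a) (hp k a)

/-- Concavity of `pay i` in player `i`'s own strategy: superdifferential inequality. -/
lemma superdiff (w : Fin m → ℝ) (hw : ∀ a, 0 ≤ w a) (W ε α : Fin K → ℝ)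
    (r : Fin K → Fin m → ℝ) (hW : ∀ k, 0 < W k) (hε : ∀ k, 0 < ε k) (hα : ∀ k, 0 < α k)
    (x : Fin N → Fin K → Fin m → ℝ) (hx : ∀ j k a, 0 ≤ x j k a)
    (i : Fin N) (y : Fin K → Fin m → ℝ) (hy : ∀ k a, 0 ≤ y k a) :
    pay w W ε α r i (Function.update x i y) ≤
      pay w W ε α r i x + ∑ k, ∑ a, gr w W ε α r x i k a * (y k a - x i k a) := by
  unfold pay
  rw [← Finset.sum_add_distrib]
  apply Finset.sum_le_sum
  intro k _
  set φ := sf w (x i) k with hφdef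
  set ψ := sf w y k with hψdef
  set B := (∑ j ∈ univ.erase i, sf w (x j) k) + ε k with hBdef
  have hφ : 0 ≤ φ := sf_nonneg hw (hx i) k
  have hψ : 0 ≤ ψ := sf_nonneg hw hy k
  have hB : 0 < B := add_pos_of_nonneg_of_pos
    (Finset.sum_nonneg fun j _ => sf_nonneg hw (hx j) k) (hε k)
  have hdx : den w ε x k = φ + B := by
    rw [den, ← Finset.add_sum_erase _ _ (mem_univ i)]; ring
  have hdu : den w ε (Function.update x i y) k = ψ + B := by
    rw [den, sum_update (f := fun p => sf w p k)]; ring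
  have hupd : Function.update x i y i = y := Function.update_self i y x
  -- the inner sums over players in the cost term
  have hcostsum : ∀ a, (∑ j, Function.update x i y j k a)
      = y k a + ∑ j ∈ univ.erase i, x j k a := fun a =>
    sum_update (f := fun p => p k a) x i y
  have hfull : ∀ a, (∑ j, x j k a) = x i k a + ∑ j ∈ univ.erase i, x j k a := fun a =>
    (Finset.add_sum_erase _ _ (mem_univ i)).symm
  -- Tullock part
  have tullock : W k * ψ / (ψ + B) ≤ W k * φ / (φ + B) + W k * B / (φ + B)^2 * (ψ - φ) := by
    have hd1 : 0 < φ + B := by linarith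
    have hd2 : 0 < ψ + B := by linarith
    have heq : W k * ψ / (ψ + B) - W k * φ / (φ + B)
        = W k * B * (ψ - φ) / ((ψ + B) * (φ + B)) := by
      field_simp; ring
    have hle : W k * B * (ψ - φ) / ((ψ + B) * (φ + B)) ≤ W k * B / (φ + B)^2 * (ψ - φ) := by
      rw [div_mul_eq_mul_div, div_le_div_iff₀ (by positivity) (by positivity)]
      nlinarith [mul_nonneg (mul_nonneg (mul_nonneg (hW k).le hB.le) hd1.le)
        (sq_nonneg (ψ - φ))]
    linarith
  -- gradient sum identity
  have gsum : ∑ a, gr w W ε α r x i k a * (y k a - x i k a)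
      = W k * B / (φ + B)^2 * (ψ - φ)
        - ∑ a, (α k * (x i k a + ∑ j, x j k a) + r k a) * (y k a - x i k a) := by
    unfold gr
    rw [hdx]
    have : ∀ a ∈ univ, (W k * w a * (φ + B - φ) / (φ + B)^2
          - (α k * (x i k a + ∑ j, x j k a) + r k a)) * (y k a - x i k a)
        = W k * B / (φ + B)^2 * (w a * y k a - w a * x i k a)
          - (α k * (x i k a + ∑ j, x j k a) + r k a) * (y k a - x i k a) := by
      intro a _; ring
    rw [Finset.sum_congr rfl this, Finset.sum_sub_distrib]
    congr 1
    rw [← Finset.mul_sum, Finset.sum_sub_distrib]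
    rw [hψdef, hφdef]
    rfl
  -- cost part
  have cost : ∑ a, x i k a * (α k * (∑ j, x j k a) + r k a)
        + ∑ a, (α k * (x i k a + ∑ j, x j k a) + r k a) * (y k a - x i k a)
      ≤ ∑ a, y k a * (α k * (y k a + ∑ j ∈ univ.erase i, x j k a) + r k a) := by
    rw [← Finset.sum_add_distrib]
    apply Finset.sum_le_sum
    intro a _
    rw [hfull a]
    nlinarith [sq_nonneg (y k a - x i k a), (hα k).le]
  calc W k * sf w (Function.update x i y i) k / den w ε (Function.update x i y) k
        - ∑ a, Function.update x i y i k a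
            * (α k * (∑ j, Function.update x i y j k a) + r k a)
      = W k * ψ / (ψ + B)
        - ∑ a, y k a * (α k * (y k a + ∑ j ∈ univ.erase i, x j k a) + r k a) := by
        rw [hupd, hdu]
        congr 1
        exact Finset.sum_congr rfl fun a _ => by rw [hcostsum a]
    _ ≤ (W k * φ / (φ + B) - ∑ a, x i k a * (α k * (∑ j, x j k a) + r k a))
        + ∑ a, gr w W ε α r x i k a * (y k a - x i k a) := by
        rw [gsum]; linarith
    _ = W k * sf w (x i) k / den w ε x k - ∑ a, x i k a * (α k * (∑ j, x j k a) + r k a)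
        + ∑ a, gr w W ε α r x i k a * (y k a - x i k a) := by rw [hdx]


/-- Strict diagonal concavity (monotonicity of the pseudo-gradient). -/
lemma mono (w : Fin m → ℝ) (hw : ∀ a, 0 ≤ w a) (W ε α : Fin K → ℝ)
    (r : Fin K → Fin m → ℝ) (hW : ∀ k, 0 < W k) (hε : ∀ k, 0 < ε k) (hα : ∀ k, 0 < α k)
    (x y : Fin N → Fin K → Fin m → ℝ) (hx : ∀ j k a, 0 ≤ x j k a)
    (hy : ∀ j k a, 0 ≤ y j k a) :
    ∑ i, ∑ k, ∑ a, (gr w W ε α r x i k a - gr w W ε α r y i k a) * (x i k a - y i k a)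
      ≤ - ∑ k, α k * ∑ i, ∑ a, (x i k a - y i k a)^2 := by
  rw [Finset.sum_comm, ← Finset.sum_neg_distrib]
  apply Finset.sum_le_sum
  intro k _
  set E := den w ε x k with hEdef
  set F := den w ε y k with hFdef
  have hkey : ∑ i, ((E - sf w (x i) k)/E^2 - (F - sf w (y i) k)/F^2)
      * (sf w (x i) k - sf w (y i) k) ≤ 0 :=
    key_ineq (ε k) (hε k) (fun j => sf w (x j) k) (fun j => sf w (y j) k)
      (fun j => sf_nonneg hw (hx j) k) (fun j => sf_nonneg hw (hy j) k)
  have hsplit : ∑ i, ∑ a, (gr w W ε α r x i k a - gr w W ε α r y i k a) * (x i k a - y i k a)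
      = W k * ∑ i, ((E - sf w (x i) k)/E^2 - (F - sf w (y i) k)/F^2)
          * (sf w (x i) k - sf w (y i) k)
        - ∑ i, ∑ a, ((α k * (x i k a + ∑ j, x j k a))
            - (α k * (y i k a + ∑ j, y j k a))) * (x i k a - y i k a) := by
    rw [Finset.mul_sum, ← Finset.sum_sub_distrib]
    apply Finset.sum_congr rfl
    intro i _
    have h1 : ∀ a ∈ univ, (gr w W ε α r x i k a - gr w W ε α r y i k a) * (x i k a - y i k a)
        = W k * ((E - sf w (x i) k)/E^2 - (F - sf w (y i) k)/F^2)
            * (w a * x i k a - w a * y i k a)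
          - ((α k * (x i k a + ∑ j, x j k a))
              - (α k * (y i k a + ∑ j, y j k a))) * (x i k a - y i k a) := by
      intro a _
      unfold gr
      rw [← hEdef, ← hFdef]
      ring
    rw [Finset.sum_congr rfl h1, Finset.sum_sub_distrib]
    congr 1
    rw [← Finset.mul_sum, Finset.sum_sub_distrib]
    simp only [sf]
    ring
  have hcost : ∑ i, ∑ a, ((α k * (x i k a + ∑ j, x j k a))
        - (α k * (y i k a + ∑ j, y j k a))) * (x i k a - y i k a)
      = α k * ((∑ i, ∑ a, (x i k a - y i k a)^2)
          + ∑ a, (∑ j, (x j k a - y j k a))^2) := by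
    have h1 : ∀ (i : Fin N) (a : Fin m), ((α k * (x i k a + ∑ j, x j k a))
          - (α k * (y i k a + ∑ j, y j k a))) * (x i k a - y i k a)
        = α k * (x i k a - y i k a)^2
          + α k * ((∑ j, (x j k a - y j k a)) * (x i k a - y i k a)) := by
      intro i a
      rw [Finset.sum_sub_distrib]
      ring
    simp only [h1]
    have h2 : ∑ i, ∑ a, (α k * (x i k a - y i k a)^2
          + α k * ((∑ j, (x j k a - y j k a)) * (x i k a - y i k a)))
        = (∑ i, ∑ a, α k * (x i k a - y i k a)^2)
          + ∑ i, ∑ a, α k * ((∑ j, (x j k a - y j k a)) * (x i k a - y i k a)) := by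
      rw [← Finset.sum_add_distrib]
      exact Finset.sum_congr rfl fun i _ => Finset.sum_add_distrib
    rw [h2]
    have h3 : ∑ i, ∑ a, α k * ((∑ j, (x j k a - y j k a)) * (x i k a - y i k a))
        = ∑ a, α k * (∑ j, (x j k a - y j k a))^2 := by
      rw [Finset.sum_comm]
      apply Finset.sum_congr rfl
      intro a _
      rw [← Finset.mul_sum, ← Finset.mul_sum, sq]
    rw [h3]
    simp only [← Finset.mul_sum]
    ring
  have hsq : 0 ≤ ∑ a, (∑ j, (x j k a - y j k a))^2 :=
    Finset.sum_nonneg fun a _ => sq_nonneg _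
  have hWkey : W k * (∑ i, ((E - sf w (x i) k)/E^2 - (F - sf w (y i) k)/F^2)
      * (sf w (x i) k - sf w (y i) k)) ≤ 0 :=
    mul_nonpos_iff.mpr (Or.inl ⟨(hW k).le, hkey⟩)
  have hd2 : 0 ≤ ∑ i, ∑ a, (x i k a - y i k a)^2 :=
    Finset.sum_nonneg fun i _ => Finset.sum_nonneg fun a _ => sq_nonneg _
  nlinarith [mul_nonneg (hα k).le hsq, mul_nonneg (hα k).le hd2]


/-- At a Nash point, the first-order variational inequality holds. -/
lemma nash_vi (w : Fin m → ℝ) (hw : ∀ a, 0 ≤ w a) (W ε α : Fin K → ℝ)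
    (r : Fin K → Fin m → ℝ) (hW : ∀ k, 0 < W k) (hε : ∀ k, 0 < ε k) (hα : ∀ k, 0 < α k)
    (X : Fin N → Set (Fin K → Fin m → ℝ))
    (hX : ∀ i, ∀ p ∈ X i, ∀ (k : Fin K) (a : Fin m), 0 ≤ p k a)
    (hconv : ∀ i, Convex ℝ (X i))
    (x : Fin N → Fin K → Fin m → ℝ) (hx : ∀ j, x j ∈ X j) (i : Fin N)
    (hnash : ∀ y ∈ X i, pay w W ε α r i (Function.update x i y) ≤ pay w W ε α r i x)
    (y : Fin K → Fin m → ℝ) (hy : y ∈ X i) :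
    ∑ k, ∑ a, gr w W ε α r x i k a * (y k a - x i k a) ≤ 0 := by
  set z : ℝ → Fin K → Fin m → ℝ := fun t k a => x i k a + t * (y k a - x i k a) with hzdef
  have hzmem : ∀ t : ℝ, 0 ≤ t → t ≤ 1 → z t ∈ X i := by
    intro t ht0 ht1
    have hz : z t = (1 - t) • (x i) + t • y := by
      funext k a
      simp only [hzdef, Pi.add_apply, Pi.smul_apply, smul_eq_mul]
      ring
    rw [hz]
    exact hconv i (hx i) hy (by linarith) ht0 (by ring)
  -- step A : for positive t the VI holds at the shifted point
  have hA : ∀ t : ℝ, 0 < t → t ≤ 1 →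
      ∑ k, ∑ a, gr w W ε α r (Function.update x i (z t)) i k a * (y k a - x i k a) ≤ 0 := by
    intro t ht0 ht1
    have hzt : z t ∈ X i := hzmem t ht0.le ht1
    have horth : ∀ j k a, 0 ≤ Function.update x i (z t) j k a := by
      intro j k a
      rcases eq_or_ne j i with h | h
      · subst h; rw [Function.update_self]; exact hX _ _ hzt k a
      · rw [Function.update_of_ne h]; exact hX j _ (hx j) k a
    have hsd := superdiff w hw W ε α r hW hε hα (Function.update x i (z t)) horth i (x i)
      (fun k a => hX i _ (hx i) k a)
    rw [Function.update_idem, Function.update_eq_self] at hsd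
    simp only [Function.update_self] at hsd
    have hinc : ∑ k, ∑ a, gr w W ε α r (Function.update x i (z t)) i k a
          * (x i k a - z t k a)
        = -t * ∑ k, ∑ a, gr w W ε α r (Function.update x i (z t)) i k a
            * (y k a - x i k a) := by
      rw [Finset.mul_sum]
      apply Finset.sum_congr rfl
      intro k _
      rw [Finset.mul_sum]
      apply Finset.sum_congr rfl
      intro a _
      simp only [hzdef]
      ring
    rw [hinc] at hsd
    have hlt := hnash (z t) hzt
    by_contra hpos
    push_neg at hpos
    nlinarith [mul_pos ht0 hpos]
  -- closed form of the VI expression along the segment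
  have hform : ∀ t : ℝ, ∀ k : Fin K,
      ∑ a, gr w W ε α r (Function.update x i (z t)) i k a * (y k a - x i k a)
      = W k * ((∑ j ∈ univ.erase i, sf w (x j) k) + ε k) * (sf w y k - sf w (x i) k)
          / (den w ε x k + t * (sf w y k - sf w (x i) k))^2
        - ((∑ a, (α k * (2 * x i k a + ∑ j ∈ univ.erase i, x j k a) + r k a)
              * (y k a - x i k a))
            + t * (2 * α k * ∑ a, (y k a - x i k a)^2)) := by
    intro t k
    have hsfz : sf w (z t) k = sf w (x i) k + t * (sf w y k - sf w (x i) k) := by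
      simp only [hzdef, sf]
      have h1 : ∀ a ∈ univ, w a * (x i k a + t * (y k a - x i k a))
          = w a * x i k a + t * (w a * y k a - w a * x i k a) := fun a _ => by ring
      rw [Finset.sum_congr rfl h1, Finset.sum_add_distrib]
      congr 1
      rw [← Finset.mul_sum, Finset.sum_sub_distrib]
    have hdu : den w ε (Function.update x i (z t)) k
        = den w ε x k + t * (sf w y k - sf w (x i) k) := by
      rw [den, sum_update (f := fun p => sf w p k), hsfz, den,
        ← Finset.add_sum_erase _ (fun j => sf w (x j) k) (mem_univ i)]
      ring
    have hcostj : ∀ a, ∑ j, Function.update x i (z t) j k a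
        = z t k a + ∑ j ∈ univ.erase i, x j k a := fun a =>
      sum_update (f := fun p => p k a) x i (z t)
    have hterm : ∀ a ∈ univ, gr w W ε α r (Function.update x i (z t)) i k a
          * (y k a - x i k a)
        = W k * ((∑ j ∈ univ.erase i, sf w (x j) k) + ε k)
            / (den w ε x k + t * (sf w y k - sf w (x i) k))^2
            * (w a * y k a - w a * x i k a)
          - ((α k * (2 * x i k a + ∑ j ∈ univ.erase i, x j k a) + r k a)
              * (y k a - x i k a)
            + t * (2 * α k * (y k a - x i k a)^2)) := by
      intro a _
      unfold gr
      rw [Function.update_self, hdu, hcostj a, hsfz]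
      rw [show den w ε x k = sf w (x i) k + ((∑ j ∈ univ.erase i, sf w (x j) k) + ε k) by
        rw [den, ← Finset.add_sum_erase _ (fun j => sf w (x j) k) (mem_univ i)]; ring]
      simp only [hzdef]
      ring
    rw [Finset.sum_congr rfl hterm, Finset.sum_sub_distrib]
    congr 1
    · rw [← Finset.mul_sum, Finset.sum_sub_distrib]
      simp only [sf]
      ring
    · rw [Finset.sum_add_distrib]
      congr 1
      rw [← Finset.mul_sum]
      congr 1
      rw [← Finset.mul_sum]
  -- continuity in t at 0 and passage to the limit
  have hz0 : Function.update x i (z 0) = x := by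
    have h0 : z 0 = x i := by funext k a; simp [hzdef]
    rw [h0, Function.update_eq_self]
  have hdenpos : ∀ k, 0 < den w ε x k :=
    fun k => add_pos_of_nonneg_of_pos
      (Finset.sum_nonneg fun j _ => sf_nonneg hw (fun k a => hX j _ (hx j) k a) k) (hε k)
  have hlim : Filter.Tendsto
      (fun t : ℝ => ∑ k, ∑ a, gr w W ε α r (Function.update x i (z t)) i k a
        * (y k a - x i k a)) (nhds 0)
      (nhds (∑ k, ∑ a, gr w W ε α r x i k a * (y k a - x i k a))) := by
    have hfun : (fun t : ℝ => ∑ k, ∑ a, gr w W ε α r (Function.update x i (z t)) i k a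
        * (y k a - x i k a))
        = fun t : ℝ => ∑ k, (W k * ((∑ j ∈ univ.erase i, sf w (x j) k) + ε k)
            * (sf w y k - sf w (x i) k)
            / (den w ε x k + t * (sf w y k - sf w (x i) k))^2
          - ((∑ a, (α k * (2 * x i k a + ∑ j ∈ univ.erase i, x j k a) + r k a)
                * (y k a - x i k a))
              + t * (2 * α k * ∑ a, (y k a - x i k a)^2))) := by
      funext t
      exact Finset.sum_congr rfl fun k _ => hform t k
    rw [hfun]
    have hval : ∑ k, ∑ a, gr w W ε α r x i k a * (y k a - x i k a)
        = ∑ k, (W k * ((∑ j ∈ univ.erase i, sf w (x j) k) + ε k)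
            * (sf w y k - sf w (x i) k)
            / (den w ε x k + 0 * (sf w y k - sf w (x i) k))^2
          - ((∑ a, (α k * (2 * x i k a + ∑ j ∈ univ.erase i, x j k a) + r k a)
                * (y k a - x i k a))
              + 0 * (2 * α k * ∑ a, (y k a - x i k a)^2))) := by
      apply Finset.sum_congr rfl
      intro k _
      have h := hform 0 k
      rw [hz0] at h
      exact h
    rw [hval]
    apply tendsto_finset_sum
    intro k _
    apply Filter.Tendsto.sub
    · apply Filter.Tendsto.div tendsto_const_nhds
      · exact (tendsto_const_nhds.add (Filter.tendsto_id.mul tendsto_const_nhds)).pow 2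
      · have h0 : den w ε x k + 0 * (sf w y k - sf w (x i) k) = den w ε x k := by ring
        rw [h0]
        exact pow_ne_zero 2 (hdenpos k).ne'
    · exact tendsto_const_nhds.add (Filter.tendsto_id.mul tendsto_const_nhds)
  have hseq : Filter.Tendsto (fun n : ℕ => (1 : ℝ) / (n + 1)) Filter.atTop (nhds 0) :=
    tendsto_one_div_add_atTop_nhds_zero_nat
  refine le_of_tendsto (hlim.comp hseq) (Filter.Eventually.of_forall fun n => ?_)
  refine hA _ (by positivity) ?_
  rw [div_le_one (by positivity)]
  linarith [Nat.cast_nonneg (α := ℝ) n]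


/-- Lipschitz estimate for the function `(u,v) ↦ u / v²` on a box. -/
lemma quot_lip (e M u v u' v' : ℝ) (he : 0 < e) (hu : 0 ≤ u) (hu' : 0 ≤ u')
    (huM : u ≤ M) (huM' : u' ≤ M) (hvl : e ≤ v) (hvM : v ≤ M) (hvl' : e ≤ v')
    (hvM' : v' ≤ M) :
    |u/v^2 - u'/v'^2| ≤ |u - u'|/e^2 + 2*M^2*|v - v'|/e^4 := by
  have hv0 : 0 < v := lt_of_lt_of_le he hvl
  have hv0' : 0 < v' := lt_of_lt_of_le he hvl'
  have hM : 0 < M := lt_of_lt_of_le (lt_of_lt_of_le he hvl) hvM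
  have heq : u/v^2 - u'/v'^2 = (u - u')/v^2 + u'*((v' - v)*(v' + v))/(v^2*v'^2) := by
    field_simp
    ring
  rw [heq]
  refine (abs_add_le _ _).trans (add_le_add ?_ ?_)
  · rw [abs_div, abs_of_pos (by positivity : (0:ℝ) < v^2)]
    apply div_le_div_of_nonneg_left (abs_nonneg _) (by positivity)
    nlinarith
  · rw [abs_div, abs_of_pos (by positivity : (0:ℝ) < v^2*v'^2), abs_mul, abs_mul]
    have h1 : |u'| ≤ M := by rw [abs_of_nonneg hu']; exact huM'
    have h2 : |v' + v| ≤ 2*M := by rw [abs_of_pos (by linarith)]; linarith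
    have h0 : e^2 ≤ v*v' := by nlinarith
    have h3 : e^4 ≤ v^2*v'^2 := by nlinarith [h0, sq_nonneg (v*v' - e^2)]
    calc |u'| * (|v' - v| * |v' + v|) / (v^2*v'^2)
        ≤ M * (|v' - v| * (2*M)) / e^4 := by
          apply div_le_div₀ (by positivity)
            (mul_le_mul h1 (mul_le_mul_of_nonneg_left h2 (abs_nonneg _))
              (by positivity) hM.le) (by positivity) h3
      _ = 2*M^2*|v - v|/e^4 + 2*M^2*|v - v'|/e^4 - 2*M^2*|v - v|/e^4 := by
          rw [abs_sub_comm v' v]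
          ring
      _ = 2*M^2*|v - v'|/e^4 := by simp

/-- Lipschitz bound for the pseudo-gradient on a box `[0,R]`. -/
lemma lip (w : Fin m → ℝ) (hw : ∀ a, 0 ≤ w a) (W ε α : Fin K → ℝ)
    (r : Fin K → Fin m → ℝ) (hW : ∀ k, 0 < W k) (hε : ∀ k, 0 < ε k) (hα : ∀ k, 0 < α k)
    (R : ℝ) (hR : 0 ≤ R) :
    ∃ L : ℝ, 0 < L ∧ ∀ x y : Fin N → Fin K → Fin m → ℝ,
      (∀ i k a, 0 ≤ x i k a ∧ x i k a ≤ R) → (∀ i k a, 0 ≤ y i k a ∧ y i k a ≤ R) →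
      ∑ i, ∑ k, ∑ a, (gr w W ε α r x i k a - gr w W ε α r y i k a)^2
        ≤ L * ∑ i, ∑ k, ∑ a, (x i k a - y i k a)^2 := by
  set wsum := ∑ a, w a with hwsumdef
  have hwsum : 0 ≤ wsum := Finset.sum_nonneg fun a _ => hw a
  have hwa : ∀ a, w a ≤ wsum := fun a =>
    Finset.single_le_sum (fun b _ => hw b) (mem_univ a)
  set Mk : Fin K → ℝ := fun k => N * wsum * R + ε k with hMkdef
  have hMk : ∀ k, 0 < Mk k := fun k => add_pos_of_nonneg_of_pos (by positivity) (hε k)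
  set Ck : Fin K → ℝ := fun k =>
    W k * wsum * ((N+1) * wsum / (ε k)^2 + 2 * (Mk k)^2 * (N*wsum) / (ε k)^4)
      + α k * (N+1) with hCkdef
  have hCk0 : ∀ k, 0 ≤ Ck k := fun k => by
    have h1 := (hW k).le
    have h2 := (hε k)
    have h3 := (hα k).le
    have h4 := (hMk k).le
    positivity
  set C : ℝ := ∑ k, Ck k with hCdef
  have hCk : ∀ k, Ck k ≤ C := fun k =>
    Finset.single_le_sum (fun b _ => hCk0 b) (mem_univ k)
  have hC0 : 0 ≤ C := Finset.sum_nonneg fun k _ => hCk0 k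
  refine ⟨((N:ℝ)*K*m*C)^2 + 1, by positivity, ?_⟩
  intro x y hx hy
  set n1 := ∑ i, ∑ k, ∑ a, |x i k a - y i k a| with hn1def
  have hn10 : 0 ≤ n1 :=
    Finset.sum_nonneg fun i _ => Finset.sum_nonneg fun k _ =>
      Finset.sum_nonneg fun a _ => abs_nonneg _
  have habs : ∀ i k a, |x i k a - y i k a| ≤ n1 := by
    intro i k a
    calc |x i k a - y i k a| ≤ ∑ a, |x i k a - y i k a| :=
          Finset.single_le_sum (f := fun b => |x i k b - y i k b|)
            (fun b _ => abs_nonneg _) (mem_univ a)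
      _ ≤ ∑ k, ∑ a, |x i k a - y i k a| :=
          Finset.single_le_sum (f := fun k => ∑ a, |x i k a - y i k a|)
            (fun b _ => Finset.sum_nonneg fun c _ => abs_nonneg _) (mem_univ k)
      _ ≤ n1 :=
          Finset.single_le_sum (f := fun i => ∑ k, ∑ a, |x i k a - y i k a|)
            (fun b _ => Finset.sum_nonneg fun c _ =>
              Finset.sum_nonneg fun e _ => abs_nonneg _) (mem_univ i)
  have hsfd : ∀ (j : Fin N) (k : Fin K), |sf w (x j) k - sf w (y j) k| ≤ wsum * n1 := by
    intro j k
    rw [sf, sf, ← Finset.sum_sub_distrib]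
    calc |∑ a, (w a * x j k a - w a * y j k a)|
        ≤ ∑ a, |w a * x j k a - w a * y j k a| := Finset.abs_sum_le_sum_abs _ _
      _ ≤ ∑ a, w a * n1 := by
          apply Finset.sum_le_sum
          intro a _
          rw [← mul_sub, abs_mul, abs_of_nonneg (hw a)]
          exact mul_le_mul_of_nonneg_left (habs j k a) (hw a)
      _ = wsum * n1 := by rw [← Finset.sum_mul]
  have hdend : ∀ k, |den w ε x k - den w ε y k| ≤ N * (wsum * n1) := by
    intro k
    rw [den, den]
    have h1 : (∑ j, sf w (x j) k) + ε k - ((∑ j, sf w (y j) k) + ε k)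
        = ∑ j, (sf w (x j) k - sf w (y j) k) := by
      rw [Finset.sum_sub_distrib]; ring
    rw [h1]
    calc |∑ j, (sf w (x j) k - sf w (y j) k)|
        ≤ ∑ j, |sf w (x j) k - sf w (y j) k| := Finset.abs_sum_le_sum_abs _ _
      _ ≤ ∑ _j : Fin N, wsum * n1 := Finset.sum_le_sum fun j _ => hsfd j k
      _ = N * (wsum * n1) := by
          rw [Finset.sum_const, Finset.card_univ, Fintype.card_fin, nsmul_eq_mul]
  -- bounds on sf and den
  have hsfb : ∀ (p : Fin N → Fin K → Fin m → ℝ),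
      (∀ i k a, 0 ≤ p i k a ∧ p i k a ≤ R) → ∀ j k,
      0 ≤ sf w (p j) k ∧ sf w (p j) k ≤ wsum * R := by
    intro p hp j k
    constructor
    · exact sf_nonneg hw (fun k a => (hp j k a).1) k
    · rw [sf]
      calc ∑ a, w a * p j k a ≤ ∑ a, w a * R :=
            Finset.sum_le_sum fun a _ => mul_le_mul_of_nonneg_left (hp j k a).2 (hw a)
        _ = wsum * R := by rw [hwsumdef, Finset.sum_mul]
  have hdenb : ∀ (p : Fin N → Fin K → Fin m → ℝ),
      (∀ i k a, 0 ≤ p i k a ∧ p i k a ≤ R) → ∀ k,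
      ε k ≤ den w ε p k ∧ den w ε p k ≤ Mk k := by
    intro p hp k
    constructor
    · rw [den]
      have := Finset.sum_nonneg (s := univ) fun j (_ : j ∈ univ) => (hsfb p hp j k).1
      linarith
    · rw [den, hMkdef]
      have : ∑ j, sf w (p j) k ≤ ∑ _j : Fin N, wsum * R :=
        Finset.sum_le_sum fun j _ => (hsfb p hp j k).2
      rw [Finset.sum_const, Finset.card_univ, Fintype.card_fin, nsmul_eq_mul] at this
      simp only []
      nlinarith
  have hnum : ∀ (p : Fin N → Fin K → Fin m → ℝ),
      (∀ i k a, 0 ≤ p i k a ∧ p i k a ≤ R) → ∀ i k,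
      0 ≤ den w ε p k - sf w (p i) k ∧ den w ε p k - sf w (p i) k ≤ Mk k := by
    intro p hp i k
    constructor
    · rw [den]
      have h1 : sf w (p i) k ≤ ∑ j, sf w (p j) k :=
        Finset.single_le_sum (fun j _ => (hsfb p hp j k).1) (mem_univ i)
      have := (hε k).le
      linarith
    · have h1 := (hdenb p hp k).2
      have h2 := (hsfb p hp i k).1
      linarith
  -- coordinatewise Lipschitz bound
  have hco : ∀ i k a, |gr w W ε α r x i k a - gr w W ε α r y i k a| ≤ Ck k * n1 := by
    intro i k a
    have hsplit : gr w W ε α r x i k a - gr w W ε α r y i k a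
        = W k * w a * ((den w ε x k - sf w (x i) k)/(den w ε x k)^2
            - (den w ε y k - sf w (y i) k)/(den w ε y k)^2)
          - α k * ((x i k a - y i k a) + (∑ j, x j k a - ∑ j, y j k a)) := by
      unfold gr
      ring
    rw [hsplit]
    have hq := quot_lip (ε k) (Mk k) (den w ε x k - sf w (x i) k) (den w ε x k)
      (den w ε y k - sf w (y i) k) (den w ε y k) (hε k)
      (hnum x hx i k).1 (hnum y hy i k).1 (hnum x hx i k).2 (hnum y hy i k).2
      (hdenb x hx k).1 (hdenb x hx k).2 (hdenb y hy k).1 (hdenb y hy k).2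
    have hdu : |(den w ε x k - sf w (x i) k) - (den w ε y k - sf w (y i) k)|
        ≤ (N+1) * (wsum * n1) := by
      have h1 : (den w ε x k - sf w (x i) k) - (den w ε y k - sf w (y i) k)
          = (den w ε x k - den w ε y k) - (sf w (x i) k - sf w (y i) k) := by ring
      rw [h1]
      calc |(den w ε x k - den w ε y k) - (sf w (x i) k - sf w (y i) k)|
          ≤ |den w ε x k - den w ε y k| + |sf w (x i) k - sf w (y i) k| := abs_sub _ _
        _ ≤ N * (wsum * n1) + wsum * n1 := add_le_add (hdend k) (hsfd i k)
        _ = (N+1) * (wsum * n1) := by ring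
    have hSd : |∑ j, x j k a - ∑ j, y j k a| ≤ N * n1 := by
      rw [← Finset.sum_sub_distrib]
      calc |∑ j, (x j k a - y j k a)| ≤ ∑ j, |x j k a - y j k a| :=
            Finset.abs_sum_le_sum_abs _ _
        _ ≤ ∑ _j : Fin N, n1 := Finset.sum_le_sum fun j _ => habs j k a
        _ = N * n1 := by
            rw [Finset.sum_const, Finset.card_univ, Fintype.card_fin, nsmul_eq_mul]
    have h3 : |(den w ε x k - sf w (x i) k)/(den w ε x k)^2
        - (den w ε y k - sf w (y i) k)/(den w ε y k)^2|
        ≤ (N+1) * (wsum * n1) / (ε k)^2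
          + 2 * (Mk k)^2 * (N * (wsum * n1)) / (ε k)^4 := by
      refine hq.trans (add_le_add ?_ ?_)
      · exact (div_le_div_iff_of_pos_right (pow_pos (hε k) 2)).mpr hdu
      · exact (div_le_div_iff_of_pos_right (pow_pos (hε k) 4)).mpr
          (mul_le_mul_of_nonneg_left (hdend k) (by positivity))
    calc |W k * w a * ((den w ε x k - sf w (x i) k)/(den w ε x k)^2
            - (den w ε y k - sf w (y i) k)/(den w ε y k)^2)
          - α k * ((x i k a - y i k a) + (∑ j, x j k a - ∑ j, y j k a))|
        ≤ |W k * w a * ((den w ε x k - sf w (x i) k)/(den w ε x k)^2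
            - (den w ε y k - sf w (y i) k)/(den w ε y k)^2)|
          + |α k * ((x i k a - y i k a) + (∑ j, x j k a - ∑ j, y j k a))| := abs_sub _ _
      _ ≤ W k * wsum * ((N+1) * (wsum * n1) / (ε k)^2
            + 2 * (Mk k)^2 * (N * (wsum * n1)) / (ε k)^4)
          + α k * (n1 + N * n1) := by
          apply add_le_add
          · rw [abs_mul, abs_mul, abs_of_pos (hW k), abs_of_nonneg (hw a)]
            exact mul_le_mul (mul_le_mul_of_nonneg_left (hwa a) (hW k).le) h3
              (abs_nonneg _) (mul_nonneg (hW k).le hwsum)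
          · rw [abs_mul, abs_of_pos (hα k)]
            refine mul_le_mul_of_nonneg_left ?_ (hα k).le
            exact (abs_add_le _ _).trans (add_le_add (habs i k a) hSd)
      _ = Ck k * n1 := by
          simp only [hCkdef]
          ring
  -- assemble, using Cauchy-Schwarz style counting
  set Sd := ∑ i, ∑ k, ∑ a, (x i k a - y i k a)^2 with hSddef
  have hSd0 : 0 ≤ Sd :=
    Finset.sum_nonneg fun i _ => Finset.sum_nonneg fun k _ =>
      Finset.sum_nonneg fun a _ => sq_nonneg _
  have hn1sq : n1^2 ≤ (N:ℝ)*K*m * Sd := by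
    have c3 : ∀ (i : Fin N) (k : Fin K), (∑ a, |x i k a - y i k a|)^2
        ≤ (m:ℝ) * ∑ a, (x i k a - y i k a)^2 := by
      intro i k
      have := sq_sum_le_card_mul_sum_sq (s := univ)
        (f := fun a => |x i k a - y i k a|)
      simpa [Finset.card_univ, Fintype.card_fin, sq_abs] using this
    have c2 : ∀ i : Fin N, (∑ k, ∑ a, |x i k a - y i k a|)^2
        ≤ (K:ℝ) * ∑ k, (∑ a, |x i k a - y i k a|)^2 := by
      intro i
      have := sq_sum_le_card_mul_sum_sq (s := univ)
        (f := fun k => ∑ a, |x i k a - y i k a|)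
      simpa [Finset.card_univ, Fintype.card_fin] using this
    have c1 : n1^2 ≤ (N:ℝ) * ∑ i, (∑ k, ∑ a, |x i k a - y i k a|)^2 := by
      have := sq_sum_le_card_mul_sum_sq (s := univ)
        (f := fun i => ∑ k, ∑ a, |x i k a - y i k a|)
      simpa [Finset.card_univ, Fintype.card_fin] using this
    calc n1^2 ≤ (N:ℝ) * ∑ i, (∑ k, ∑ a, |x i k a - y i k a|)^2 := c1
      _ ≤ (N:ℝ) * ∑ i, ((K:ℝ) * ∑ k, ((m:ℝ) * ∑ a, (x i k a - y i k a)^2)) := by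
          gcongr with i _
          refine (c2 i).trans ?_
          gcongr with k _
          exact c3 i k
      _ = (N:ℝ)*K*m * Sd := by
          have e1 : ∀ i : Fin N, ((K:ℝ) * ∑ k, ((m:ℝ) * ∑ a, (x i k a - y i k a)^2))
              = (K:ℝ)*(m:ℝ) * ∑ k, ∑ a, (x i k a - y i k a)^2 := by
            intro i
            rw [← Finset.mul_sum, ← mul_assoc]
          rw [Finset.sum_congr rfl (fun i _ => e1 i), ← Finset.mul_sum, ← hSddef]
          ring
  have hcount : ∑ i, ∑ k, ∑ a, (gr w W ε α r x i k a - gr w W ε α r y i k a)^2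
      ≤ (N:ℝ)*K*m * (C*n1)^2 := by
    calc ∑ i, ∑ k, ∑ a, (gr w W ε α r x i k a - gr w W ε α r y i k a)^2
        ≤ ∑ _i : Fin N, ∑ _k : Fin K, ∑ _a : Fin m, (C*n1)^2 := by
          apply Finset.sum_le_sum; intro i _
          apply Finset.sum_le_sum; intro k _
          apply Finset.sum_le_sum; intro a _
          have h1 : |gr w W ε α r x i k a - gr w W ε α r y i k a| ≤ C * n1 :=
            (hco i k a).trans (mul_le_mul_of_nonneg_right (hCk k) hn10)
          calc (gr w W ε α r x i k a - gr w W ε α r y i k a)^2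
              = |gr w W ε α r x i k a - gr w W ε α r y i k a|^2 := (sq_abs _).symm
            _ ≤ (C*n1)^2 := pow_le_pow_left₀ (abs_nonneg _) h1 2
      _ = (N:ℝ)*K*m * (C*n1)^2 := by
          simp [Finset.sum_const, Finset.card_univ, Fintype.card_fin, nsmul_eq_mul]
          ring
  have hfin : (N:ℝ)*K*m * (C*n1)^2 ≤ ((N:ℝ)*K*m*C)^2 * Sd := by
    have h1 : C^2 * n1^2 ≤ C^2 * ((N:ℝ)*K*m * Sd) :=
      mul_le_mul_of_nonneg_left hn1sq (sq_nonneg C)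
    have h2 : (0:ℝ) ≤ (N:ℝ)*K*m := by positivity
    calc (N:ℝ)*K*m * (C*n1)^2 = (N:ℝ)*K*m * (C^2 * n1^2) := by ring
      _ ≤ (N:ℝ)*K*m * (C^2 * ((N:ℝ)*K*m * Sd)) := mul_le_mul_of_nonneg_left h1 h2
      _ = ((N:ℝ)*K*m*C)^2 * Sd := by ring
  calc ∑ i, ∑ k, ∑ a, (gr w W ε α r x i k a - gr w W ε α r y i k a)^2
      ≤ ((N:ℝ)*K*m*C)^2 * Sd := hcount.trans hfin
    _ ≤ (((N:ℝ)*K*m*C)^2 + 1) * Sd := by nlinarith [hSd0]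


/-- The canonical linear equivalence with Euclidean space. -/
noncomputable def TE (K N m : ℕ) :
    (Fin N → Fin K → Fin m → ℝ) ≃ₗ[ℝ] EuclideanSpace ℝ (Fin N × Fin K × Fin m) where
  toFun x := WithLp.toLp 2 (fun p => x p.1 p.2.1 p.2.2)
  invFun z := fun i k a => z (i, k, a)
  map_add' _ _ := rfl
  map_smul' _ _ := rfl
  left_inv _ := rfl
  right_inv _ := rfl

lemma inner_TE (x y : Fin N → Fin K → Fin m → ℝ) :
    (inner ℝ (TE K N m x) (TE K N m y) : ℝ) = ∑ i, ∑ k, ∑ a, x i k a * y i k a := by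
  rw [PiLp.inner_apply, Fintype.sum_prod_type]
  apply Finset.sum_congr rfl
  intro i _
  rw [Fintype.sum_prod_type]
  apply Finset.sum_congr rfl
  intro k _
  apply Finset.sum_congr rfl
  intro a _
  simp [RCLike.inner_apply, conj_trivial, TE]
  exact mul_comm _ _

lemma norm_TE (x : Fin N → Fin K → Fin m → ℝ) :
    ‖TE K N m x‖^2 = ∑ i, ∑ k, ∑ a, (x i k a)^2 := by
  rw [← real_inner_self_eq_norm_sq, inner_TE]
  exact Finset.sum_congr rfl fun i _ => Finset.sum_congr rfl fun k _ =>
    Finset.sum_congr rfl fun a _ => (sq _).symm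

lemma proj_exists {E : Type*} [NormedAddCommGroup E] [InnerProductSpace ℝ E] {s : Set E}
    (hne : s.Nonempty) (hcomp : IsComplete s) (hconv : Convex ℝ s) (u : E) :
    ∃ v ∈ s, ∀ z ∈ s, (inner ℝ (u - v) (z - v) : ℝ) ≤ 0 := by
  obtain ⟨v, hv, heq⟩ := exists_norm_eq_iInf_of_complete_convex hne hcomp hconv u
  exact ⟨v, hv, (norm_eq_iInf_iff_real_inner_le_zero hconv hv).1 heq⟩


lemma proj_nonexp {E : Type*} [NormedAddCommGroup E] [InnerProductSpace ℝ E]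
    {u u' pu pu' : E} (h1 : ∀ z, (inner ℝ (u - pu) (z - pu) : ℝ) ≤ 0 → True)
    (hu : (inner ℝ (u - pu) (pu' - pu) : ℝ) ≤ 0)
    (hu' : (inner ℝ (u' - pu') (pu - pu') : ℝ) ≤ 0) :
    ‖pu - pu'‖ ≤ ‖u - u'‖ := by
  have e1 : (inner ℝ (u - u') (pu - pu') : ℝ) - (inner ℝ (pu - pu') (pu - pu') : ℝ)
      = (-(inner ℝ (u - pu) (pu' - pu) : ℝ)) + (-(inner ℝ (u' - pu') (pu - pu') : ℝ)) := by
    simp only [inner_sub_left, inner_sub_right]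
    ring
  have e2 : (inner ℝ (pu - pu') (pu - pu') : ℝ) ≤ (inner ℝ (u - u') (pu - pu') : ℝ) := by
    linarith
  have e3 : ‖pu - pu'‖^2 ≤ ‖u - u'‖ * ‖pu - pu'‖ := by
    rw [← real_inner_self_eq_norm_sq]
    exact e2.trans (real_inner_le_norm _ _)
  nlinarith [norm_nonneg (pu - pu'), norm_nonneg (u - u')]

set_option maxHeartbeats 2000000 in
/-- Existence of a solution of the variational inequality. -/
lemma exists_vi (hK : 1 ≤ K) (w : Fin m → ℝ) (hw : ∀ a, 0 ≤ w a)
    (W ε α : Fin K → ℝ) (r : Fin K → Fin m → ℝ)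
    (hW : ∀ k, 0 < W k) (hε : ∀ k, 0 < ε k) (hα : ∀ k, 0 < α k)
    (X : Fin N → Set (Fin K → Fin m → ℝ))
    (hX : ∀ i, ∀ p ∈ X i, ∀ (k : Fin K) (a : Fin m), 0 ≤ p k a)
    (hne : ∀ i, (X i).Nonempty) (hcomp : ∀ i, IsCompact (X i))
    (hconv : ∀ i, Convex ℝ (X i)) :
    ∃ xb : Fin N → Fin K → Fin m → ℝ, (∀ i, xb i ∈ X i) ∧
      ∀ i : Fin N, ∀ y ∈ X i,
        ∑ k, ∑ a, gr w W ε α r xb i k a * (y k a - xb i k a) ≤ 0 := by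
  classical
  set P : Set (Fin N → Fin K → Fin m → ℝ) := Set.univ.pi X with hPdef
  have hPne : P.Nonempty := ⟨fun i => (hne i).choose, fun i _ => (hne i).choose_spec⟩
  have hPcomp : IsCompact P := isCompact_univ_pi hcomp
  have hPconv : Convex ℝ P := convex_pi fun i _ => hconv i
  have hPorth : ∀ x ∈ P, ∀ (j : Fin N) (k : Fin K) (a : Fin m), 0 ≤ x j k a :=
    fun x hx j k a => hX j (x j) (hx j (Set.mem_univ j)) k a
  -- a coordinatewise bound R on P
  obtain ⟨R0, hR0⟩ := hPcomp.isBounded.subset_closedBall 0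
  set R := max R0 0 with hRdef
  have hbox : ∀ x ∈ P, ∀ (i : Fin N) (k : Fin K) (a : Fin m),
      0 ≤ x i k a ∧ x i k a ≤ R := by
    intro x hx i k a
    refine ⟨hPorth x hx i k a, ?_⟩
    have h1 : ‖x‖ ≤ R0 := by
      have := hR0 hx
      rwa [Metric.mem_closedBall, dist_zero_right] at this
    calc x i k a ≤ |x i k a| := le_abs_self _
      _ = ‖x i k a‖ := (Real.norm_eq_abs _).symm
      _ ≤ ‖x i k‖ := norm_le_pi_norm (x i k) a
      _ ≤ ‖x i‖ := norm_le_pi_norm (x i) k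
      _ ≤ ‖x‖ := norm_le_pi_norm x i
      _ ≤ R := h1.trans (le_max_left _ _)
  obtain ⟨L0, hL0, hlip⟩ := lip (K := K) (N := N) (m := m) w hw W ε α r hW hε hα R (le_max_right R0 0)
  haveI : Nonempty (Fin K) := ⟨⟨0, hK⟩⟩
  set α₀ := Finset.univ.inf' Finset.univ_nonempty α with hα₀def
  have hα₀pos : 0 < α₀ := (Finset.lt_inf'_iff _).mpr fun k _ => hα k
  have hα₀le : ∀ k, α₀ ≤ α k := fun k => Finset.inf'_le α (mem_univ k)
  set L : ℝ := max L0 (α₀^2 + 1) with hLdef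
  have hL0' : 0 < L := lt_of_lt_of_le hL0 (le_max_left _ _)
  have hLα : α₀^2 + 1 ≤ L := le_max_right _ _
  set ρ : ℝ := α₀ / L with hρdef
  have hρpos : 0 < ρ := div_pos hα₀pos hL0'
  have hκsq : 0 ≤ 1 - α₀^2 / L := by
    rw [sub_nonneg, div_le_one hL0']
    linarith
  set κ : ℝ := Real.sqrt (1 - α₀^2 / L) with hκdef
  have hκ0 : 0 ≤ κ := Real.sqrt_nonneg _
  have hκ2 : κ^2 = 1 - α₀^2 / L := Real.sq_sqrt hκsq
  have hκ1 : κ < 1 := by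
    have h1 : 1 - α₀^2 / L < 1 := by
      have : 0 < α₀^2 / L := div_pos (by positivity) hL0'
      linarith
    nlinarith [hκ2, hκ0]
  -- strong monotonicity with uniform constant
  have hmono : ∀ x y, x ∈ P → y ∈ P →
      ∑ i, ∑ k, ∑ a, (gr w W ε α r x i k a - gr w W ε α r y i k a) * (x i k a - y i k a)
        ≤ -α₀ * ∑ i, ∑ k, ∑ a, (x i k a - y i k a)^2 := by
    intro x y hx hy
    have h1 := mono w hw W ε α r hW hε hα x y (hPorth x hx) (hPorth y hy)
    have h2 : α₀ * ∑ i, ∑ k, ∑ a, (x i k a - y i k a)^2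
        ≤ ∑ k, α k * ∑ i, ∑ a, (x i k a - y i k a)^2 := by
      rw [Finset.sum_comm (f := fun i k => ∑ a, (x i k a - y i k a)^2), Finset.mul_sum]
      apply Finset.sum_le_sum
      intro k _
      apply mul_le_mul_of_nonneg_right (hα₀le k)
      exact Finset.sum_nonneg fun i _ => Finset.sum_nonneg fun a _ => sq_nonneg _
    linarith
  -- move to Euclidean space
  set S : Set (EuclideanSpace ℝ (Fin N × Fin K × Fin m)) := (TE K N m) '' P with hSdef
  have hTcont : Continuous (TE K N m) :=
    LinearMap.continuous_of_finiteDimensional (TE K N m).toLinearMap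
  have hSne : S.Nonempty := hPne.image _
  have hScomp : IsCompact S := hPcomp.image hTcont
  have hSconv : Convex ℝ S := by
    have h := hPconv.linear_image (TE K N m).toLinearMap
    exact h
  have hSclosed : IsClosed S := hScomp.isClosed
  have hScomplete : IsComplete S := hSclosed.isComplete
  have hprex : ∀ u, ∃ v ∈ S, ∀ z ∈ S, (inner ℝ (u - v) (z - v) : ℝ) ≤ 0 :=
    fun u => proj_exists hSne hScomplete hSconv u
  choose pr hprS hprVI using hprex
  -- the gradient map on Euclidean space
  set GE : EuclideanSpace ℝ (Fin N × Fin K × Fin m) → EuclideanSpace ℝ (Fin N × Fin K × Fin m) :=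
    fun z => TE K N m (fun i k a => gr w W ε α r ((TE K N m).symm z) i k a) with hGEdef
  have hGE : ∀ x : Fin N → Fin K → Fin m → ℝ,
      GE (TE K N m x) = TE K N m (fun i k a => gr w W ε α r x i k a) := by
    intro x
    rw [hGEdef]
    simp only [LinearEquiv.symm_apply_apply]
  haveI : Nonempty ↥S := hSne.to_subtype
  haveI : CompleteSpace ↥S := hSclosed.completeSpace_coe
  set F : ↥S → ↥S := fun z => ⟨pr ((z : EuclideanSpace ℝ _) + ρ • GE z), hprS _⟩ with hFdef
  -- contraction estimate
  have hcontr : ∀ z z' : ↥S, dist (F z) (F z') ≤ κ * dist z z' := by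
    rintro ⟨z, xz, hxzP, rfl⟩ ⟨z', xz', hxz'P, rfl⟩
    have hkey : ‖(TE K N m xz + ρ • GE (TE K N m xz))
        - (TE K N m xz' + ρ • GE (TE K N m xz'))‖
        ≤ κ * ‖TE K N m xz - TE K N m xz'‖ := by
      have he1 : (TE K N m xz + ρ • GE (TE K N m xz))
          - (TE K N m xz' + ρ • GE (TE K N m xz'))
          = TE K N m ((xz - xz') + ρ • (gr w W ε α r xz - gr w W ε α r xz')) := by
        rw [hGE, hGE, map_add, map_smul, map_sub, map_sub]
        module
      have he2 : TE K N m xz - TE K N m xz' = TE K N m (xz - xz') :=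
        (map_sub (TE K N m) xz xz').symm
      rw [he1, he2]
      -- squared estimate
      set D := ∑ i, ∑ k, ∑ a, (xz i k a - xz' i k a)^2 with hDdef
      have hD0 : 0 ≤ D := Finset.sum_nonneg fun i _ => Finset.sum_nonneg fun k _ =>
        Finset.sum_nonneg fun a _ => sq_nonneg _
      have hsq : ‖TE K N m ((xz - xz') + ρ • (gr w W ε α r xz - gr w W ε α r xz'))‖^2
          ≤ κ^2 * D := by
        rw [norm_TE]
        have hexp : ∑ i, ∑ k, ∑ a, (((xz - xz') + ρ • (gr w W ε α r xz - gr w W ε α r xz')) i k a)^2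
            = D + 2*ρ * (∑ i, ∑ k, ∑ a, (gr w W ε α r xz i k a - gr w W ε α r xz' i k a)
                * (xz i k a - xz' i k a))
              + ρ^2 * (∑ i, ∑ k, ∑ a,
                (gr w W ε α r xz i k a - gr w W ε α r xz' i k a)^2) := by
          simp only [Pi.add_apply, Pi.sub_apply, Pi.smul_apply, smul_eq_mul,
            hDdef, Finset.mul_sum, ← Finset.sum_add_distrib]
          apply Finset.sum_congr rfl; intro i _
          apply Finset.sum_congr rfl; intro k _
          apply Finset.sum_congr rfl; intro a _
          ring
        rw [hexp]
        have hm := hmono xz xz' hxzP hxz'P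
        have hl := hlip xz xz' (fun i k a => hbox xz hxzP i k a) (fun i k a => hbox xz' hxz'P i k a)
        have hLL : L0 * D ≤ L * D := mul_le_mul_of_nonneg_right (le_max_left _ _) hD0
        have hρκ : 1 - 2*ρ*α₀ + ρ^2*L = κ^2 := by
          rw [hκ2, hρdef]
          field_simp
          ring
        nlinarith [mul_le_mul_of_nonneg_left hm (by positivity : (0:ℝ) ≤ 2*ρ),
          mul_le_mul_of_nonneg_left (hl.trans hLL) (sq_nonneg ρ)]
      have hnD : ‖TE K N m (xz - xz')‖^2 = D := by
        rw [norm_TE]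
        exact Finset.sum_congr rfl fun i _ => Finset.sum_congr rfl fun k _ =>
          Finset.sum_congr rfl fun a _ => by simp [Pi.sub_apply]
      have h1 : 0 ≤ ‖TE K N m (xz - xz')‖ := norm_nonneg _
      have h2 : ‖TE K N m ((xz - xz') + ρ • (gr w W ε α r xz - gr w W ε α r xz'))‖^2
          ≤ (κ * ‖TE K N m (xz - xz')‖)^2 := by
        rw [mul_pow, hnD]
        exact hsq
      exact (pow_le_pow_iff_left₀ (norm_nonneg _) (mul_nonneg hκ0 h1) two_ne_zero).mp h2
    calc dist (F ⟨TE K N m xz, xz, hxzP, rfl⟩) (F ⟨TE K N m xz', xz', hxz'P, rfl⟩)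
        = ‖pr (TE K N m xz + ρ • GE (TE K N m xz))
            - pr (TE K N m xz' + ρ • GE (TE K N m xz'))‖ := by
          rw [Subtype.dist_eq, dist_eq_norm]
      _ ≤ ‖(TE K N m xz + ρ • GE (TE K N m xz))
            - (TE K N m xz' + ρ • GE (TE K N m xz'))‖ := by
          apply proj_nonexp (fun _ _ => trivial)
          · exact hprVI _ _ (hprS _)
          · exact hprVI _ _ (hprS _)
      _ ≤ κ * ‖TE K N m xz - TE K N m xz'‖ := hkey
      _ = κ * dist (⟨TE K N m xz, xz, hxzP, rfl⟩ : ↥S) ⟨TE K N m xz', xz', hxz'P, rfl⟩ := by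
          rw [Subtype.dist_eq, dist_eq_norm]
  have hlipF : LipschitzWith κ.toNNReal F := by
    apply LipschitzWith.of_dist_le_mul
    intro z z'
    rw [Real.coe_toNNReal _ hκ0]
    exact hcontr z z'
  have hcw : ContractingWith κ.toNNReal F := by
    constructor
    · exact_mod_cast lt_of_le_of_lt (Real.coe_toNNReal κ hκ0).le hκ1
    · exact hlipF
  set z₀ : ↥S := hcw.fixedPoint F with hz₀def
  have hfix : F z₀ = z₀ := hcw.fixedPoint_isFixedPt
  obtain ⟨xb, hxbP, hxbe⟩ := z₀.2
  have hpr0 : pr ((z₀ : EuclideanSpace ℝ _) + ρ • GE z₀) = (z₀ : EuclideanSpace ℝ _) :=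
    congrArg Subtype.val hfix
  have hVI : ∀ v ∈ S, (inner ℝ (GE (z₀ : EuclideanSpace ℝ _))
      (v - (z₀ : EuclideanSpace ℝ _)) : ℝ) ≤ 0 := by
    intro v hv
    have h := hprVI ((z₀ : EuclideanSpace ℝ _) + ρ • GE z₀) v hv
    rw [hpr0] at h
    have h2 : (z₀ : EuclideanSpace ℝ _) + ρ • GE z₀ - (z₀ : EuclideanSpace ℝ _)
        = ρ • GE (z₀ : EuclideanSpace ℝ _) := by abel
    rw [h2, real_inner_smul_left] at h
    nlinarith [h, hρpos]
  refine ⟨xb, fun i => hxbP i (Set.mem_univ i), ?_⟩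
  intro i y hy
  have hupdP : Function.update xb i y ∈ P := by
    intro j _
    rcases eq_or_ne j i with rfl | hne'
    · rwa [Function.update_self]
    · rw [Function.update_of_ne hne']
      exact hxbP j (Set.mem_univ j)
  have hv := hVI (TE K N m (Function.update xb i y)) ⟨_, hupdP, rfl⟩
  rw [← hxbe, hGE, ← map_sub, inner_TE] at hv
  have hsingle : ∑ i', ∑ k, ∑ a, gr w W ε α r xb i' k a
      * ((Function.update xb i y - xb) i' k a)
      = ∑ k, ∑ a, gr w W ε α r xb i k a * (y k a - xb i k a) := by
    rw [Finset.sum_eq_single_of_mem i (mem_univ i)]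
    · simp [Function.update_self]
    · intro j _ hj
      simp [Function.update_of_ne hj]
  rw [hsingle] at hv
  exact hv



end Stmt9

open Finset

/-- Proposition 3: the lossy Tullock game with linear participation functions
`φ_{i,k}(x_{i,k}) = wᵀx_{i,k}` and demand-dependent participation costs
`x_{i,k}ᵀ(α_k Σ_j x_{j,k} + r_k)` on nonempty compact convex strategy sets
contained in the nonnegative orthant admits exactly one Nash equilibrium. -/
theorem stmt9 (K N m : ℕ) (hK : 1 ≤ K) (hN : 1 ≤ N) (hm : 1 ≤ m)
    (w : Fin m → ℝ) (hw : ∀ a, 0 ≤ w a) (hw0 : w ≠ 0)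
    (W ε α : Fin K → ℝ) (r : Fin K → Fin m → ℝ)
    (hW : ∀ k, 0 < W k) (hε : ∀ k, 0 < ε k) (hα : ∀ k, 0 < α k)
    (X : Fin N → Set (Fin K → Fin m → ℝ))
    (hX : ∀ i, ∀ x ∈ X i, ∀ (k : Fin K) (a : Fin m), 0 ≤ x k a)
    (hne : ∀ i, (X i).Nonempty) (hcomp : ∀ i, IsCompact (X i))
    (hconv : ∀ i, Convex ℝ (X i)) :
    let u : Fin N → (Fin N → Fin K → Fin m → ℝ) → ℝ := fun i x =>
      ∑ k, (W k * (∑ a, w a * x i k a) /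
          ((∑ j, ∑ a, w a * x j k a) + ε k) -
        ∑ a, x i k a * (α k * (∑ j, x j k a) + r k a))
    ∃! xb : Fin N → Fin K → Fin m → ℝ,
      (∀ i, xb i ∈ X i) ∧
      ∀ i : Fin N, ∀ y ∈ X i, u i (Function.update xb i y) ≤ u i xb := by
  intro u
  have hu : ∀ (i : Fin N) (x : Fin N → Fin K → Fin m → ℝ),
      u i x = Stmt9.pay w W ε α r i x := fun i x => rfl
  obtain ⟨xb, hxbmem, hxbVI⟩ :=
    Stmt9.exists_vi hK w hw W ε α r hW hε hα X hX hne hcomp hconv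
  have horthxb : ∀ j k a, 0 ≤ xb j k a := fun j k a => hX j _ (hxbmem j) k a
  have hnashxb : ∀ i : Fin N, ∀ y ∈ X i,
      u i (Function.update xb i y) ≤ u i xb := by
    intro i y hy
    rw [hu, hu]
    have hsd := Stmt9.superdiff w hw W ε α r hW hε hα xb horthxb i y
      (fun k a => hX i y hy k a)
    have hvi := hxbVI i y hy
    linarith
  refine ⟨xb, ⟨hxbmem, hnashxb⟩, ?_⟩
  rintro x' ⟨hx'mem, hx'nash⟩
  have horthx' : ∀ j k a, 0 ≤ x' j k a := fun j k a => hX j _ (hx'mem j) k a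
  have hVI1 : ∀ i : Fin N,
      ∑ k, ∑ a, Stmt9.gr w W ε α r x' i k a * (xb i k a - x' i k a) ≤ 0 := by
    intro i
    refine Stmt9.nash_vi w hw W ε α r hW hε hα X hX hconv x' hx'mem i ?_ (xb i) (hxbmem i)
    intro y hy
    have h := hx'nash i y hy
    rwa [hu, hu] at h
  have hVI2 : ∀ i : Fin N,
      ∑ k, ∑ a, Stmt9.gr w W ε α r xb i k a * (x' i k a - xb i k a) ≤ 0 :=
    fun i => hxbVI i (x' i) (hx'mem i)
  have hm := Stmt9.mono w hw W ε α r hW hε hα x' xb horthx' horthxb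
  have hsum : 0 ≤ ∑ i, ∑ k, ∑ a,
      (Stmt9.gr w W ε α r x' i k a - Stmt9.gr w W ε α r xb i k a)
        * (x' i k a - xb i k a) := by
    have e : ∀ i : Fin N, ∑ k, ∑ a,
        (Stmt9.gr w W ε α r x' i k a - Stmt9.gr w W ε α r xb i k a)
          * (x' i k a - xb i k a)
        = (-1) * (∑ k, ∑ a, Stmt9.gr w W ε α r x' i k a * (xb i k a - x' i k a))
          + (-1) * (∑ k, ∑ a, Stmt9.gr w W ε α r xb i k a * (x' i k a - xb i k a)) := by
      intro i
      rw [Finset.mul_sum, Finset.mul_sum, ← Finset.sum_add_distrib]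
      apply Finset.sum_congr rfl; intro k _
      rw [Finset.mul_sum, Finset.mul_sum, ← Finset.sum_add_distrib]
      apply Finset.sum_congr rfl; intro a _
      ring
    rw [Finset.sum_congr rfl (fun i _ => e i)]
    apply Finset.sum_nonneg
    intro i _
    nlinarith [hVI1 i, hVI2 i]
  have hterm : ∀ k ∈ univ, 0 ≤ α k * ∑ i, ∑ a, (x' i k a - xb i k a)^2 :=
    fun k _ => mul_nonneg (hα k).le (Finset.sum_nonneg fun i _ =>
      Finset.sum_nonneg fun a _ => sq_nonneg _)
  have hzero : ∑ k, α k * ∑ i, ∑ a, (x' i k a - xb i k a)^2 = 0 :=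
    le_antisymm (by linarith) (Finset.sum_nonneg hterm)
  have hSk : ∀ k, ∑ i, ∑ a, (x' i k a - xb i k a)^2 = 0 := by
    intro k
    have h := (Finset.sum_eq_zero_iff_of_nonneg hterm).mp hzero k (mem_univ k)
    exact (mul_eq_zero.mp h).resolve_left (hα k).ne'
  funext i k a
  have h1 := (Finset.sum_eq_zero_iff_of_nonneg (fun i _ =>
    Finset.sum_nonneg fun a _ => sq_nonneg _)).mp (hSk k) i (mem_univ i)
  have h2 := (Finset.sum_eq_zero_iff_of_nonneg (fun a _ => sq_nonneg
    (x' i k a - xb i k a))).mp h1 a (mem_univ a)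
  have h3 : x' i k a - xb i k a = 0 := by
    have := sq_eq_zero_iff.mp h2
    exact this
  linarith
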